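/- arXiv:2311.15910 — 2 statements merged into one kernel-verified Lean document; each statement's English description precedes it below -/
import Mathlib

section
/- Let K be a field, E a graph, v, w ∈ E^0, and e_1, …, e_n distinct edges with s(e_i) = v, r(e_i) = w. For all P, Q ∈ GL_n(wL_K(E)w), one has φ_P ∘ φ_Q = φ_{P φ_P(Q)}. In particular, φ_P^m = φ_{P_m} for every positive integer m, where P_m := P φ_P(P) ⋯ φ_P^{m-1}(P). -/
/-- A directed graph `E = (E⁰, E¹, s, r)`. -/
structure DirGraph : Type 1 where
  V : Type
  E : Type
  s : E → V
  r : E → V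

/-- Generators of the Leavitt path algebra: vertices, edges and ghost edges. -/
inductive LGen (G : DirGraph) : Type
  | vertex : G.V → LGen G
  | edge : G.E → LGen G
  | ghost : G.E → LGen G

/-- The defining relations of the Leavitt path algebra. -/
inductive LRel (K : Type) [Field K] (G : DirGraph) :
    FreeAlgebra K (LGen G) → FreeAlgebra K (LGen G) → Prop
  | vertexIdem (u : G.V) :
      LRel K G (FreeAlgebra.ι K (LGen.vertex u) * FreeAlgebra.ι K (LGen.vertex u))
        (FreeAlgebra.ι K (LGen.vertex u))
  | vertexOrth (u u' : G.V) (h : u ≠ u') :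
      LRel K G (FreeAlgebra.ι K (LGen.vertex u) * FreeAlgebra.ι K (LGen.vertex u')) 0
  | sourceEdge (e : G.E) :
      LRel K G (FreeAlgebra.ι K (LGen.vertex (G.s e)) * FreeAlgebra.ι K (LGen.edge e))
        (FreeAlgebra.ι K (LGen.edge e))
  | edgeRange (e : G.E) :
      LRel K G (FreeAlgebra.ι K (LGen.edge e) * FreeAlgebra.ι K (LGen.vertex (G.r e)))
        (FreeAlgebra.ι K (LGen.edge e))
  | ghostSource (e : G.E) :
      LRel K G (FreeAlgebra.ι K (LGen.ghost e) * FreeAlgebra.ι K (LGen.vertex (G.s e)))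
        (FreeAlgebra.ι K (LGen.ghost e))
  | rangeGhost (e : G.E) :
      LRel K G (FreeAlgebra.ι K (LGen.vertex (G.r e)) * FreeAlgebra.ι K (LGen.ghost e))
        (FreeAlgebra.ι K (LGen.ghost e))
  | ghostEdgeSame (e : G.E) :
      LRel K G (FreeAlgebra.ι K (LGen.ghost e) * FreeAlgebra.ι K (LGen.edge e))
        (FreeAlgebra.ι K (LGen.vertex (G.r e)))
  | ghostEdgeNe (e f : G.E) (h : e ≠ f) :
      LRel K G (FreeAlgebra.ι K (LGen.ghost e) * FreeAlgebra.ι K (LGen.edge f)) 0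
  | ck2 (u : G.V) (hfin : {e : G.E | G.s e = u}.Finite) (hne : {e : G.E | G.s e = u}.Nonempty) :
      LRel K G (FreeAlgebra.ι K (LGen.vertex u))
        (hfin.toFinset.sum fun e =>
          FreeAlgebra.ι K (LGen.edge e) * FreeAlgebra.ι K (LGen.ghost e))

/-- The Leavitt path algebra `L_K(E)` of a graph. -/
abbrev LPA (K : Type) [Field K] (G : DirGraph) : Type := RingQuot (LRel K G)

noncomputable def vertexEl (K : Type) [Field K] (G : DirGraph) (u : G.V) : LPA K G :=
  RingQuot.mkAlgHom K (LRel K G) (FreeAlgebra.ι K (LGen.vertex u))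

noncomputable def edgeEl (K : Type) [Field K] (G : DirGraph) (e : G.E) : LPA K G :=
  RingQuot.mkAlgHom K (LRel K G) (FreeAlgebra.ι K (LGen.edge e))

noncomputable def ghostEl (K : Type) [Field K] (G : DirGraph) (e : G.E) : LPA K G :=
  RingQuot.mkAlgHom K (LRel K G) (FreeAlgebra.ι K (LGen.ghost e))

/-- A list of edges is a (finite) path when ranges and sources match up. -/
def IsPath (G : DirGraph) (l : List G.E) : Prop :=
  l.Chain' fun e f => G.r e = G.s f

noncomputable def edgeProd (K : Type) [Field K] (G : DirGraph) (l : List G.E) : LPA K G :=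
  (l.map (edgeEl K G)).prod

/-- For a path `q`, the element `q* = e_k* ⋯ e_1*`. -/
noncomputable def ghostProd (K : Type) [Field K] (G : DirGraph) (l : List G.E) : LPA K G :=
  (l.reverse.map (ghostEl K G)).prod

/-- The degree `d` component of the ℤ-grading of `L_K(E)`:
the `K`-span of the elements `p q*` with `r(p) = r(q)` and `|p| - |q| = d`. -/
noncomputable def lpaComponent (K : Type) [Field K] (G : DirGraph) (d : ℤ) :
    Submodule K (LPA K G) :=
  Submodule.span K {x : LPA K G | ∃ p q : List G.E, ∃ u : G.V,
    IsPath G p ∧ IsPath G q ∧ (p.length : ℤ) - (q.length : ℤ) = d ∧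
    x = edgeProd K G p * vertexEl K G u * ghostProd K G q}

/-- Membership in the corner `w L_K(E) w`. -/
def InCorner (K : Type) [Field K] (G : DirGraph) (w : G.V) (x : LPA K G) : Prop :=
  vertexEl K G w * x * vertexEl K G w = x

/-- `(P, P')` is a pair consisting of an element of `GL_n(w L_K(E) w)` and its inverse:
all entries lie in the corner `w L_K(E) w`, and `P P' = P' P = w·I_n`,
the identity matrix of `M_n(w L_K(E) w)`. -/
def IsCornerGLPair (K : Type) [Field K] (G : DirGraph) (w : G.V) {n : ℕ}
    (P P' : Matrix (Fin n) (Fin n) (LPA K G)) : Prop :=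
  (∀ i j, InCorner K G w (P i j)) ∧ (∀ i j, InCorner K G w (P' i j)) ∧
    P * P' = Matrix.diagonal (fun _ => vertexEl K G w) ∧
    P' * P = Matrix.diagonal (fun _ => vertexEl K G w)

/-- The defining property of the endomorphism `φ_P` of `L_K(E)` attached to a matrix
`P` (with inverse `P'`) over the corner `w L_K(E) w`:  it fixes all vertices, fixes all
edges and ghost edges other than `e_1, …, e_n`, and sends
`e_i ↦ Σ_k e_k p_{k i}` and `e_i* ↦ Σ_k p'_{i k} e_k*`. -/
def PhiProps (K : Type) [Field K] (G : DirGraph) {n : ℕ} (es : Fin n → G.E)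
    (P P' : Matrix (Fin n) (Fin n) (LPA K G)) (φ : LPA K G →ₐ[K] LPA K G) : Prop :=
  (∀ u : G.V, φ (vertexEl K G u) = vertexEl K G u) ∧
  (∀ e : G.E, e ∉ Set.range es → φ (edgeEl K G e) = edgeEl K G e) ∧
  (∀ e : G.E, e ∉ Set.range es → φ (ghostEl K G e) = ghostEl K G e) ∧
  (∀ i, φ (edgeEl K G (es i)) = ∑ k, edgeEl K G (es k) * P k i) ∧
  (∀ i, φ (ghostEl K G (es i)) = ∑ k, P' i k * ghostEl K G (es k))

section Aux

variable {K : Type} [Field K] {G : DirGraph} {w : G.V}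

lemma vertex_idem (u : G.V) :
    vertexEl K G u * vertexEl K G u = vertexEl K G u := by
  rw [vertexEl, ← map_mul]
  exact RingQuot.mkAlgHom_rel K (LRel.vertexIdem u)

lemma corner_left {x : LPA K G} (h : InCorner K G w x) :
    vertexEl K G w * x = x := by
  conv_lhs => rw [← h]
  rw [← mul_assoc, ← mul_assoc, vertex_idem, h]

lemma corner_right {x : LPA K G} (h : InCorner K G w x) :
    x * vertexEl K G w = x := by
  conv_lhs => rw [← h]
  rw [mul_assoc, mul_assoc, vertex_idem, ← mul_assoc, h]

lemma corner_mul {x y : LPA K G} (hx : InCorner K G w x) (hy : InCorner K G w y) :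
    InCorner K G w (x * y) := by
  unfold InCorner
  rw [mul_assoc, mul_assoc, corner_right hy, ← mul_assoc, corner_left hx]

lemma corner_sum {ι : Type*} (s : Finset ι) (f : ι → LPA K G)
    (h : ∀ i ∈ s, InCorner K G w (f i)) : InCorner K G w (∑ i ∈ s, f i) := by
  unfold InCorner
  rw [Finset.mul_sum, Finset.sum_mul]
  exact Finset.sum_congr rfl fun i hi => h i hi

lemma corner_map {φ : LPA K G →ₐ[K] LPA K G}
    (hφ : ∀ u : G.V, φ (vertexEl K G u) = vertexEl K G u)
    {x : LPA K G} (hx : InCorner K G w x) : InCorner K G w (φ x) := by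
  unfold InCorner
  rw [← hφ w, ← map_mul, ← map_mul, hx]

lemma map_matrix_mul {n : ℕ} (φ : LPA K G →ₐ[K] LPA K G)
    (A B : Matrix (Fin n) (Fin n) (LPA K G)) :
    (A * B).map ⇑φ = A.map ⇑φ * B.map ⇑φ := by
  ext i j
  simp [Matrix.mul_apply, Matrix.map_apply, map_sum]

lemma mul_diag_self {n : ℕ} {A : Matrix (Fin n) (Fin n) (LPA K G)}
    (hA : ∀ i j, InCorner K G w (A i j)) :
    A * Matrix.diagonal (fun _ => vertexEl K G w) = A := by
  ext i j
  rw [Matrix.mul_diagonal]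
  exact corner_right (hA i j)

lemma diag_mul_self {n : ℕ} {A : Matrix (Fin n) (Fin n) (LPA K G)}
    (hA : ∀ i j, InCorner K G w (A i j)) :
    Matrix.diagonal (fun _ => vertexEl K G w) * A = A := by
  ext i j
  rw [Matrix.diagonal_mul]
  exact corner_left (hA i j)

/-- The key composition lemma: `φ_P ∘ φ_Q = φ_{P φ_P(Q)}`. -/
lemma comp_lemma {n : ℕ} (es : Fin n → G.E)
    (P P' Q Q' : Matrix (Fin n) (Fin n) (LPA K G))
    (hP : IsCornerGLPair K G w P P') (hQ : IsCornerGLPair K G w Q Q')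
    (φP φQ : LPA K G →ₐ[K] LPA K G)
    (hφP : PhiProps K G es P P' φP) (hφQ : PhiProps K G es Q Q' φQ) :
    IsCornerGLPair K G w (P * Q.map ⇑φP) (Q'.map ⇑φP * P') ∧
    PhiProps K G es (P * Q.map ⇑φP) (Q'.map ⇑φP * P') (φP.comp φQ) := by
  obtain ⟨hPc, hP'c, hPP', hP'P⟩ := hP
  obtain ⟨hQc, hQ'c, hQQ', hQ'Q⟩ := hQ
  obtain ⟨hPv, hPe, hPg, hPei, hPgi⟩ := hφP
  obtain ⟨hQv, hQe, hQg, hQei, hQgi⟩ := hφQ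
  have hQm : ∀ i j, InCorner K G w ((Q.map ⇑φP) i j) := fun i j =>
    corner_map hPv (hQc i j)
  have hQ'm : ∀ i j, InCorner K G w ((Q'.map ⇑φP) i j) := fun i j =>
    corner_map hPv (hQ'c i j)
  have hdiag : (Matrix.diagonal (fun _ : Fin n => vertexEl K G w)).map ⇑φP =
      Matrix.diagonal (fun _ => vertexEl K G w) := by
    rw [Matrix.diagonal_map (map_zero φP)]
    simp [hPv]
  have hprod : ∀ i j, InCorner K G w ((P * Q.map ⇑φP) i j) := by
    intro i j
    rw [Matrix.mul_apply]
    exact corner_sum _ _ fun k _ => corner_mul (hPc i k) (hQm k j)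
  have hprod' : ∀ i j, InCorner K G w ((Q'.map ⇑φP * P') i j) := by
    intro i j
    rw [Matrix.mul_apply]
    exact corner_sum _ _ fun k _ => corner_mul (hQ'm i k) (hP'c k j)
  refine ⟨⟨hprod, hprod', ?_, ?_⟩, ?_, ?_, ?_, ?_, ?_⟩
  · calc P * Q.map ⇑φP * (Q'.map ⇑φP * P')
        = P * (Q.map ⇑φP * Q'.map ⇑φP) * P' := by
          rw [mul_assoc, mul_assoc, mul_assoc]
      _ = P * P' := by
          rw [← map_matrix_mul, hQQ', hdiag, mul_diag_self hPc]
      _ = _ := hPP'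
  · calc Q'.map ⇑φP * P' * (P * Q.map ⇑φP)
        = Q'.map ⇑φP * (P' * P) * Q.map ⇑φP := by
          rw [mul_assoc, mul_assoc, mul_assoc]
      _ = Q'.map ⇑φP * Q.map ⇑φP := by
          rw [hP'P, mul_diag_self hQ'm]
      _ = _ := by rw [← map_matrix_mul, hQ'Q, hdiag]
  · intro u; simp [AlgHom.comp_apply, hQv, hPv]
  · intro e he; simp [AlgHom.comp_apply, hQe e he, hPe e he]
  · intro e he; simp [AlgHom.comp_apply, hQg e he, hPg e he]
  · intro i
    rw [AlgHom.comp_apply, hQei i, map_sum]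
    simp_rw [map_mul, hPei, Finset.sum_mul, mul_assoc]
    rw [Finset.sum_comm]
    simp_rw [Matrix.mul_apply, Finset.mul_sum, Matrix.map_apply]
  · intro i
    rw [AlgHom.comp_apply, hQgi i, map_sum]
    simp_rw [map_mul, hPgi, Finset.mul_sum, ← mul_assoc]
    rw [Finset.sum_comm]
    simp_rw [Matrix.mul_apply, Finset.sum_mul, Matrix.map_apply]

lemma algHom_coe_pow (φ : LPA K G →ₐ[K] LPA K G) (m : ℕ) :
    ⇑(φ ^ m) = (⇑φ)^[m] :=
  hom_coe_pow (fun f : LPA K G →ₐ[K] LPA K G => ⇑f) rfl (fun _ _ => rfl) φ m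

end Aux

/-- `φ_P ∘ φ_Q = φ_{P φ_P(Q)}`; in particular `φ_P^m = φ_{P_m}` for every
positive integer `m`, where `P_m := P φ_P(P) ⋯ φ_P^{m-1}(P)` (with inverse
`P_m^{-1} = φ_P^{m-1}(P') ⋯ φ_P(P') P'`).  (By the uniqueness of the endomorphism
attached to a matrix, the conclusions say precisely that `φ_P ∘ φ_Q` is the endomorphism
attached to `P φ_P(Q)` and that `φ_P^m` is the endomorphism attached to `P_m`.) -/
theorem stmt2 (K : Type) [Field K] (G : DirGraph) (n : ℕ) (hn : 0 < n)
    (v w : G.V) (es : Fin n → G.E) (hes : Function.Injective es)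
    (hs : ∀ i, G.s (es i) = v) (hr : ∀ i, G.r (es i) = w)
    (P P' Q Q' : Matrix (Fin n) (Fin n) (LPA K G))
    (hP : IsCornerGLPair K G w P P') (hQ : IsCornerGLPair K G w Q Q')
    (φP φQ : LPA K G →ₐ[K] LPA K G)
    (hφP : PhiProps K G es P P' φP) (hφQ : PhiProps K G es Q Q' φQ)
    (Pm Pm' : ℕ → Matrix (Fin n) (Fin n) (LPA K G))
    (hPm1 : Pm 1 = P) (hPmS : ∀ m, 1 ≤ m → Pm (m + 1) = Pm m * P.map ((⇑φP)^[m]))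
    (hPm'1 : Pm' 1 = P') (hPm'S : ∀ m, 1 ≤ m → Pm' (m + 1) = P'.map ((⇑φP)^[m]) * Pm' m) :
    IsCornerGLPair K G w (P * Q.map ⇑φP) (Q'.map ⇑φP * P') ∧
    PhiProps K G es (P * Q.map ⇑φP) (Q'.map ⇑φP * P') (φP.comp φQ) ∧
    (∀ m : ℕ, 1 ≤ m →
      IsCornerGLPair K G w (Pm m) (Pm' m) ∧ PhiProps K G es (Pm m) (Pm' m) (φP ^ m)) := by
  obtain ⟨hgl, hph⟩ := comp_lemma es P P' Q Q' hP hQ φP φQ hφP hφQ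
  refine ⟨hgl, hph, ?_⟩
  intro m hm
  induction m, hm using Nat.le_induction with
  | base =>
      rw [hPm1, hPm'1, pow_one]
      exact ⟨hP, hφP⟩
  | succ m hm ih =>
      obtain ⟨ihgl, ihph⟩ := ih
      have key := comp_lemma es (Pm m) (Pm' m) P P' ihgl hP (φP ^ m) φP ihph hφP
      rw [hPmS m hm, hPm'S m hm, ← algHom_coe_pow]
      have hpow : φP ^ (m + 1) = (φP ^ m).comp φP := by rw [pow_succ]; rfl
      rw [hpow]
      exact key
end

section
/- Let n ≥ 2 be an integer, K a field, R_n the rose graph with n petals, and u a unit of L_K(R_n). Then f_u is an automorphism of L_K(R_n) if and only if u^{-1} = f_u(w) for some unit w of L_K(R_n); in this case f_u^{-1} = f_w. Consequently, the group of graded automorphisms satisfies Aut^{gr}(L_K(R_n)) = { f_u ∈ Aut(L_K(R_n)) : u is a unit of the degree-zero component L_K(R_n)_0 }. -/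
/-- Generators of the Leavitt path algebra of the rose with `n` petals:
the edges `e_1, …, e_n` and the ghost edges `e_1*, …, e_n*` (the single vertex `v` is the
identity `1`). -/
inductive RGen (n : ℕ) : Type
  | e : Fin n → RGen n
  | g : Fin n → RGen n

/-- The defining relations of `L_K(R_n)`: `e_i* e_j = δ_{ij} v` and `Σ_i e_i e_i* = v`,
where `v = 1`. -/
inductive RoseRel (K : Type) [Field K] (n : ℕ) :
    FreeAlgebra K (RGen n) → FreeAlgebra K (RGen n) → Prop
  | ghostEdgeSame (i : Fin n) :
      RoseRel K n (FreeAlgebra.ι K (RGen.g i) * FreeAlgebra.ι K (RGen.e i)) 1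
  | ghostEdgeNe (i j : Fin n) (h : i ≠ j) :
      RoseRel K n (FreeAlgebra.ι K (RGen.g i) * FreeAlgebra.ι K (RGen.e j)) 0
  | ck2 :
      RoseRel K n (∑ i : Fin n, FreeAlgebra.ι K (RGen.e i) * FreeAlgebra.ι K (RGen.g i)) 1

/-- The Leavitt path algebra `L_K(R_n)` of the rose with `n` petals. -/
abbrev LRose (K : Type) [Field K] (n : ℕ) : Type := RingQuot (RoseRel K n)

/-- The edge `e_i` as an element of `L_K(R_n)`. -/
noncomputable def ee (K : Type) [Field K] (n : ℕ) (i : Fin n) : LRose K n :=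
  RingQuot.mkAlgHom K (RoseRel K n) (FreeAlgebra.ι K (RGen.e i))

/-- The ghost edge `e_i*` as an element of `L_K(R_n)`. -/
noncomputable def gg (K : Type) [Field K] (n : ℕ) (i : Fin n) : LRose K n :=
  RingQuot.mkAlgHom K (RoseRel K n) (FreeAlgebra.ι K (RGen.g i))

/-- The degree `d` component of the ℤ-grading of `L_K(R_n)`: the `K`-span of the
elements `p q*` with `|p| - |q| = d`. -/
noncomputable def rComponent (K : Type) [Field K] (n : ℕ) (d : ℤ) :
    Submodule K (LRose K n) :=
  Submodule.span K {x : LRose K n | ∃ p q : List (Fin n),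
    (p.length : ℤ) - (q.length : ℤ) = d ∧
    x = (p.map (ee K n)).prod * (q.reverse.map (gg K n)).prod}

/-- A map is graded when it preserves every homogeneous component. -/
def RGraded (K : Type) [Field K] (n : ℕ) (f : LRose K n → LRose K n) : Prop :=
  ∀ d : ℤ, ∀ x ∈ rComponent K n d, f x ∈ rComponent K n d

/-- The defining property of the endomorphism `φ_P` of `L_K(R_n)` attached to a matrix
`P` with inverse `P'`: it sends `e_i ↦ Σ_k e_k p_{k i}` and `e_i* ↦ Σ_k p'_{i k} e_k*`
(and `v = 1 ↦ 1` automatically). -/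
def RPhiProps (K : Type) [Field K] (n : ℕ) (P P' : Matrix (Fin n) (Fin n) (LRose K n))
    (φ : LRose K n →ₐ[K] LRose K n) : Prop :=
  (∀ i, φ (ee K n i) = ∑ k, ee K n k * P k i) ∧
  (∀ i, φ (gg K n i) = ∑ k, P' i k * gg K n k)

section Dev
variable (K : Type) [Field K] (n : ℕ)

/-- products of edges -/
noncomputable def EE (p : List (Fin n)) : LRose K n := (p.map (ee K n)).prod
/-- products of ghost edges, reversed -/
noncomputable def GG (q : List (Fin n)) : LRose K n := (q.reverse.map (gg K n)).prod

variable {K n}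

lemma gg_mul_ee (i j : Fin n) :
    gg K n i * ee K n j = if i = j then 1 else 0 := by
  by_cases h : i = j
  · subst h
    simp only [gg, ee, ← map_mul]
    rw [RingQuot.mkAlgHom_rel K (RoseRel.ghostEdgeSame i), map_one]
    simp
  · simp only [if_neg h, gg, ee, ← map_mul]
    rw [RingQuot.mkAlgHom_rel K (RoseRel.ghostEdgeNe i j h), map_zero]

lemma sum_ee_gg : ∑ i : Fin n, ee K n i * gg K n i = 1 := by
  simp only [gg, ee, ← map_mul, ← map_sum]
  rw [RingQuot.mkAlgHom_rel K RoseRel.ck2, map_one]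

@[simp] lemma EE_nil : EE K n ([] : List (Fin n)) = 1 := rfl
@[simp] lemma GG_nil : GG K n ([] : List (Fin n)) = 1 := rfl

lemma EE_cons (i : Fin n) (p : List (Fin n)) : EE K n (i :: p) = ee K n i * EE K n p := by
  simp [EE]

lemma EE_append (p r : List (Fin n)) : EE K n (p ++ r) = EE K n p * EE K n r := by
  simp [EE]

lemma GG_cons (i : Fin n) (q : List (Fin n)) : GG K n (i :: q) = GG K n q * gg K n i := by
  simp [GG]

lemma GG_append (q s : List (Fin n)) : GG K n (q ++ s) = GG K n s * GG K n q := by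
  simp [GG]

lemma GG_mul_EE (q r : List (Fin n)) :
    GG K n q * EE K n r =
      if q <+: r then EE K n (r.drop q.length)
      else if r <+: q then GG K n (q.drop r.length) else 0 := by
  induction q generalizing r with
  | nil => simp
  | cons i q' ih =>
    rw [GG_cons]
    cases r with
    | nil =>
      rw [← GG_cons]
      simp
    | cons j r' =>
      rw [EE_cons, mul_assoc, ← mul_assoc (gg K n i), gg_mul_ee]
      by_cases h : i = j
      · subst h
        rw [if_pos rfl, one_mul, ih r']
        simp only [List.cons_prefix_cons, true_and, List.length_cons, List.drop_succ_cons]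
      · rw [if_neg h, zero_mul, mul_zero]
        rw [if_neg, if_neg]
        · intro hpre; exact h (List.cons_prefix_cons.mp hpre).1.symm
        · intro hpre; exact h (List.cons_prefix_cons.mp hpre).1

end Dev

section Dev2
variable {K : Type} [Field K] {n : ℕ}

lemma mem_comp_monomial (p q : List (Fin n)) :
    EE K n p * GG K n q ∈ rComponent K n ((p.length : ℤ) - (q.length : ℤ)) :=
  Submodule.subset_span ⟨p, q, rfl, rfl⟩

lemma ee_mem_comp (i : Fin n) : ee K n i ∈ rComponent K n 1 := by
  have := mem_comp_monomial (K := K) [i] ([] : List (Fin n))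
  simpa [EE_cons] using this

lemma gg_mem_comp (i : Fin n) : gg K n i ∈ rComponent K n (-1) := by
  have := mem_comp_monomial (K := K) ([] : List (Fin n)) [i]
  simpa [GG_cons] using this

lemma one_mem_comp : (1 : LRose K n) ∈ rComponent K n 0 := by
  have := mem_comp_monomial (K := K) ([] : List (Fin n)) ([] : List (Fin n))
  simpa using this

lemma comp_mul {d e : ℤ} {x y : LRose K n} (hx : x ∈ rComponent K n d)
    (hy : y ∈ rComponent K n e) : x * y ∈ rComponent K n (d + e) := by
  induction hx using Submodule.span_induction with
  | mem x hxm =>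
    obtain ⟨p, q, hpq, rfl⟩ := hxm
    induction hy using Submodule.span_induction with
    | mem y hym =>
      obtain ⟨r, s, hrs, rfl⟩ := hym
      show EE K n p * GG K n q * (EE K n r * GG K n s) ∈ _
      rw [mul_assoc, ← mul_assoc (GG K n q), GG_mul_EE]
      by_cases h1 : q <+: r
      · rw [if_pos h1]
        have hle := h1.length_le
        rw [← mul_assoc, ← EE_append]
        have hdeg : (((p ++ r.drop q.length).length : ℤ) - (s.length : ℤ)) = d + e := by
          simp only [List.length_append, List.length_drop]
          omega
        exact hdeg ▸ mem_comp_monomial _ _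
      · rw [if_neg h1]
        by_cases h2 : r <+: q
        · rw [if_pos h2]
          have hle := h2.length_le
          have hdeg : ((p.length : ℤ) - (((s ++ q.drop r.length)).length : ℤ)) = d + e := by
            simp only [List.length_append, List.length_drop]
            omega
          rw [← GG_append]
          exact hdeg ▸ mem_comp_monomial _ _
        · rw [if_neg h2, zero_mul, mul_zero]
          exact zero_mem _
    | zero => rw [mul_zero]; exact zero_mem _
    | add y z hy hz hy' hz' => rw [mul_add]; exact add_mem hy' hz'
    | smul a y hy hy' => rw [mul_smul_comm]; exact Submodule.smul_mem _ _ hy'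
  | zero => rw [zero_mul]; exact zero_mem _
  | add x y hx hy hx' hy' => rw [add_mul]; exact add_mem hx' hy'
  | smul a x hx hx' => rw [smul_mul_assoc]; exact Submodule.smul_mem _ _ hx'

end Dev2

section Dev3
variable {K : Type} [Field K] {n : ℕ}

/-- All monomials `p q*`, as a family. -/
noncomputable def rMono (K : Type) [Field K] (n : ℕ) :
    List (Fin n) × List (Fin n) → LRose K n :=
  fun pq => EE K n pq.1 * GG K n pq.2

lemma mul_mem_span_mono {x y : LRose K n}
    (hx : x ∈ Submodule.span K (Set.range (rMono K n)))
    (hy : y ∈ Submodule.span K (Set.range (rMono K n))) :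
    x * y ∈ Submodule.span K (Set.range (rMono K n)) := by
  induction hx using Submodule.span_induction with
  | mem x hxm =>
    obtain ⟨⟨p, q⟩, rfl⟩ := hxm
    induction hy using Submodule.span_induction with
    | mem y hym =>
      obtain ⟨⟨r, s⟩, rfl⟩ := hym
      show EE K n p * GG K n q * (EE K n r * GG K n s) ∈ _
      rw [mul_assoc, ← mul_assoc (GG K n q), GG_mul_EE]
      by_cases h1 : q <+: r
      · rw [if_pos h1, ← mul_assoc, ← EE_append]
        exact Submodule.subset_span ⟨(p ++ r.drop q.length, s), rfl⟩
      · rw [if_neg h1]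
        by_cases h2 : r <+: q
        · rw [if_pos h2, ← GG_append]
          exact Submodule.subset_span ⟨(p, s ++ q.drop r.length), rfl⟩
        · rw [if_neg h2, zero_mul, mul_zero]
          exact zero_mem _
    | zero => rw [mul_zero]; exact zero_mem _
    | add y z hy hz hy' hz' => rw [mul_add]; exact add_mem hy' hz'
    | smul a y hy hy' => rw [mul_smul_comm]; exact Submodule.smul_mem _ _ hy'
  | zero => rw [zero_mul]; exact zero_mem _
  | add x y hx hy hx' hy' => rw [add_mul]; exact add_mem hx' hy'
  | smul a x hx hx' => rw [smul_mul_assoc]; exact Submodule.smul_mem _ _ hx'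

lemma one_mem_span_mono : (1 : LRose K n) ∈ Submodule.span K (Set.range (rMono K n)) := by
  refine Submodule.subset_span ⟨([], []), ?_⟩
  simp [rMono]

lemma mem_span_mono (x : LRose K n) :
    x ∈ Submodule.span K (Set.range (rMono K n)) := by
  obtain ⟨y, rfl⟩ := RingQuot.mkAlgHom_surjective K (RoseRel K n) x
  induction y using FreeAlgebra.induction with
  | grade0 r =>
    rw [AlgHom.commutes, Algebra.algebraMap_eq_smul_one]
    exact Submodule.smul_mem _ _ one_mem_span_mono
  | grade1 x =>
    cases x with
    | e i =>
      refine Submodule.subset_span ⟨([i], []), ?_⟩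
      show rMono K n _ = ee K n i
      simp [rMono, EE_cons]
    | g i =>
      refine Submodule.subset_span ⟨([], [i]), ?_⟩
      show rMono K n _ = gg K n i
      simp [rMono, GG_cons]
  | mul a b ha hb => rw [map_mul]; exact mul_mem_span_mono ha hb
  | add a b ha hb => rw [map_add]; exact add_mem ha hb

lemma sum_EE_GG_ofFn (k : ℕ) :
    ∑ μ : Fin k → Fin n, EE K n (List.ofFn μ) * GG K n (List.ofFn μ) = 1 := by
  induction k with
  | zero =>
    rw [Finset.sum_eq_single_of_mem (fun i : Fin 0 => i.elim0) (Finset.mem_univ _)]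
    · simp
    · intro b _ hb
      exact absurd (funext fun i : Fin 0 => i.elim0) hb
  | succ k ih =>
    rw [← (Fin.consEquiv (fun _ : Fin (k+1) => Fin n)).sum_comp
      (fun μ => EE K n (List.ofFn μ) * GG K n (List.ofFn μ))]
    have hof : ∀ (i : Fin n) (μ : Fin k → Fin n),
        List.ofFn (Fin.cons i μ : Fin (k+1) → Fin n) = i :: List.ofFn μ := by
      intro i μ
      rw [List.ofFn_succ]
      simp
    rw [Fintype.sum_prod_type]
    have : ∀ i : Fin n, ∑ μ : Fin k → Fin n,
        EE K n (List.ofFn (Fin.consEquiv _ (i, μ))) * GG K n (List.ofFn (Fin.consEquiv _ (i, μ)))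
        = ee K n i * gg K n i := by
      intro i
      have : ∀ μ : Fin k → Fin n,
          EE K n (List.ofFn (Fin.consEquiv (fun _ : Fin (k+1) => Fin n) (i, μ))) *
            GG K n (List.ofFn (Fin.consEquiv (fun _ : Fin (k+1) => Fin n) (i, μ)))
          = ee K n i * (EE K n (List.ofFn μ) * GG K n (List.ofFn μ)) * gg K n i := by
        intro μ
        show EE K n (List.ofFn (Fin.cons i μ)) * GG K n (List.ofFn (Fin.cons i μ)) = _
        rw [hof, EE_cons, GG_cons]
        simp only [mul_assoc]
      rw [Finset.sum_congr rfl (fun μ _ => this μ), ← Finset.sum_mul, ← Finset.mul_sum, ih,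
        mul_one]
    rw [Finset.sum_congr rfl (fun i _ => this i), sum_ee_gg]

end Dev3

section Dev4
variable {K : Type} [Field K] {n : ℕ}

lemma sigma_not_prefix {z o : Fin n} (hzo : o ≠ z) {N : ℕ} {t : List (Fin n)}
    (ht : t ≠ []) (htN : t.length ≤ N) :
    ¬ (List.replicate N z ++ [o]) <+: (t ++ (List.replicate N z ++ [o])) := by
  intro h
  have ht1 : 1 ≤ t.length := List.length_pos_iff.mpr ht
  have htake := List.prefix_iff_eq_take.mp h
  rw [List.take_append] at htake
  rw [List.take_of_length_le (by simp; omega)] at htake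
  have hlen : (List.replicate N z ++ [o]).length - t.length = (N - t.length) + 1 := by
    simp; omega
  rw [hlen, List.take_append_of_le_length (by simp; omega), List.take_replicate] at htake
  have hmin : min (N - t.length + 1) N = (N - t.length) + 1 := by omega
  rw [hmin, List.replicate_succ'] at htake
  have h2 := congrArg List.getLast? htake
  rw [List.getLast?_concat, ← List.append_assoc, List.getLast?_concat] at h2
  exact hzo (Option.some_injective _ h2)

lemma exists_factor_of_spanEE (hn : 2 ≤ n) {y : LRose K n}
    (hy : y ∈ Submodule.span K (Set.range (EE K n))) (hy0 : y ≠ 0) :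
    ∃ a b : LRose K n, a * y * b = 1 := by
  obtain ⟨d, hd⟩ := Finsupp.mem_span_range_iff_exists_finsupp.mp hy
  have hdne : d ≠ 0 := by
    rintro rfl
    rw [Finsupp.sum_zero_index] at hd
    exact hy0 hd.symm
  obtain ⟨p₀, hp₀, hmin⟩ := Finset.exists_min_image d.support (·.length)
    (Finsupp.support_nonempty_iff.mpr hdne)
  set N := d.support.sup List.length with hN
  have hzlt : (0:ℕ) < n := by omega
  have holt : (1:ℕ) < n := by omega
  set z : Fin n := ⟨0, hzlt⟩ with hz
  set o : Fin n := ⟨1, holt⟩ with ho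
  have hoz : o ≠ z := by
    simp [ho, hz, Fin.ext_iff]
  set σ : List (Fin n) := List.replicate N z ++ [o] with hσdef
  have hterm : ∀ p ∈ d.support,
      GG K n σ * GG K n p₀ * EE K n p * EE K n σ = if p = p₀ then 1 else 0 := by
    intro p hp
    have hple : p₀.length ≤ p.length := hmin p hp
    rw [mul_assoc (GG K n σ) (GG K n p₀), GG_mul_EE]
    by_cases h1 : p₀ <+: p
    · rw [if_pos h1]
      by_cases h2 : p = p₀
      · subst h2
        rw [if_pos rfl, List.drop_length, EE_nil, mul_one, GG_mul_EE,
          if_pos (List.prefix_refl σ), List.drop_length, EE_nil]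
      · rw [if_neg h2]
        have htne' : p₀.length < p.length := by
          rcases lt_or_eq_of_le h1.length_le with h | h
          · exact h
          · exact absurd (h1.eq_of_length h).symm h2
        have htne : (p.drop p₀.length) ≠ [] := by
          intro hc
          have := congrArg List.length hc
          simp at this
          omega
        have htN : (p.drop p₀.length).length ≤ N := by
          have hps : p.length ≤ N := Finset.le_sup (f := List.length) hp
          simp
          omega
        rw [mul_assoc, ← EE_append, GG_mul_EE,
          if_neg (sigma_not_prefix hoz htne htN), if_neg ?_]
        · exact fun hB => absurd hB.length_le
            (by simp [hσdef]; omega)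
    · have hne : p ≠ p₀ := by
        intro hc
        subst hc
        exact h1 (List.prefix_refl p)
      have h2 : ¬ p <+: p₀ := by
        intro h2
        have h3 := h2.eq_of_length (le_antisymm h2.length_le hple)
        subst h3
        exact h1 (List.prefix_refl p)
      rw [if_neg h1, if_neg h2, mul_zero, zero_mul, if_neg hne]
  have hdp₀ : d p₀ ≠ 0 := Finsupp.mem_support_iff.mp hp₀
  refine ⟨(d p₀)⁻¹ • (GG K n σ * GG K n p₀), EE K n σ, ?_⟩
  have hmain : GG K n σ * GG K n p₀ * y * EE K n σ = d p₀ • 1 := by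
    rw [← hd, Finsupp.sum, Finset.mul_sum, Finset.sum_mul]
    have hstep : ∀ p ∈ d.support,
        GG K n σ * GG K n p₀ * (d p • EE K n p) * EE K n σ
          = if p = p₀ then d p • (1 : LRose K n) else 0 := by
      intro p hp
      rw [mul_smul_comm, smul_mul_assoc, hterm p hp, smul_ite, smul_zero]
    rw [Finset.sum_congr rfl hstep,
      Finset.sum_ite_eq' d.support p₀ (fun p => d p • (1 : LRose K n)), if_pos hp₀]
  rw [smul_mul_assoc, smul_mul_assoc, hmain, smul_smul, inv_mul_cancel₀ hdp₀, one_smul]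

lemma exists_one_factor (hn : 2 ≤ n) {x : LRose K n} (hx : x ≠ 0) :
    ∃ a b : LRose K n, a * x * b = 1 := by
  obtain ⟨c, hc⟩ := Finsupp.mem_span_range_iff_exists_finsupp.mp (mem_span_mono x)
  set k := c.support.sup (fun pq => pq.2.length) with hk
  have hSE : ∀ μ : Fin k → Fin n,
      x * EE K n (List.ofFn μ) ∈ Submodule.span K (Set.range (EE K n)) := by
    intro μ
    rw [← hc, Finsupp.sum, Finset.sum_mul]
    refine Submodule.sum_mem _ (fun pq hpq => ?_)
    rw [smul_mul_assoc]
    refine Submodule.smul_mem _ _ ?_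
    obtain ⟨p, q⟩ := pq
    show EE K n p * GG K n q * EE K n (List.ofFn μ) ∈ _
    rw [mul_assoc, GG_mul_EE]
    have hq : q.length ≤ k :=
      Finset.le_sup (f := fun pq : List (Fin n) × List (Fin n) => pq.2.length) hpq
    have hlen : (List.ofFn μ).length = k := by simp
    by_cases h1 : q <+: List.ofFn μ
    · rw [if_pos h1, ← EE_append]
      exact Submodule.subset_span ⟨_, rfl⟩
    · rw [if_neg h1]
      have h2 : ¬ (List.ofFn μ <+: q) := by
        intro h2
        have h4 := h2.length_le
        have h3 := h2.eq_of_length (by omega)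
        cases h3
        exact h1 (List.prefix_refl _)
      rw [if_neg h2, mul_zero]
      exact zero_mem _
  have hex : ∃ μ : Fin k → Fin n, x * EE K n (List.ofFn μ) ≠ 0 := by
    by_contra hall
    push_neg at hall
    apply hx
    calc x = x * 1 := (mul_one x).symm
    _ = ∑ μ : Fin k → Fin n, x * (EE K n (List.ofFn μ) * GG K n (List.ofFn μ)) := by
        rw [← sum_EE_GG_ofFn (K := K) (n := n) k, Finset.mul_sum]
    _ = 0 := Finset.sum_eq_zero fun μ _ => by rw [← mul_assoc, hall μ, zero_mul]
  obtain ⟨μ, hμ⟩ := hex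
  obtain ⟨a, b, hab⟩ := exists_factor_of_spanEE hn (hSE μ) hμ
  exact ⟨a, EE K n (List.ofFn μ) * b, by rw [← hab]; simp only [mul_assoc]⟩

lemma lrose_algHom_injective (hn : 2 ≤ n) (f : LRose K n →ₐ[K] LRose K n) :
    Function.Injective f := by
  intro x y hxy
  by_contra hne
  have hx : x - y ≠ 0 := sub_ne_zero.mpr hne
  obtain ⟨a, b, hab⟩ := exists_one_factor hn hx
  have h1 : f (a * (x - y) * b) = 1 := by rw [hab, map_one]
  rw [map_mul, map_mul, map_sub, hxy, sub_self, mul_zero, zero_mul] at h1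
  apply hx
  rw [← mul_one (x - y), ← h1, mul_zero]

end Dev4

section Dev5
variable {K : Type} [Field K] {n : ℕ}

lemma lrose_algHom_ext {f g : LRose K n →ₐ[K] LRose K n}
    (he : ∀ i, f (ee K n i) = g (ee K n i)) (hg : ∀ i, f (gg K n i) = g (gg K n i)) :
    f = g := by
  apply RingQuot.ringQuot_ext' K f g
  apply FreeAlgebra.hom_ext
  funext x
  cases x with
  | e i => exact he i
  | g i => exact hg i

lemma exists_fw (w w' : LRose K n) (hww' : w * w' = 1) (hw'w : w' * w = 1) :
    ∃ fw : LRose K n →ₐ[K] LRose K n,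
      (∀ i, fw (ee K n i) = w * ee K n i) ∧ (∀ i, fw (gg K n i) = gg K n i * w') := by
  set F0 : FreeAlgebra K (RGen n) →ₐ[K] LRose K n :=
    FreeAlgebra.lift K (fun x => match x with
      | RGen.e i => w * ee K n i
      | RGen.g i => gg K n i * w') with hF0
  have hF0e : ∀ i, F0 (FreeAlgebra.ι K (RGen.e i)) = w * ee K n i := by
    intro i; rw [hF0, FreeAlgebra.lift_ι_apply]
  have hF0g : ∀ i, F0 (FreeAlgebra.ι K (RGen.g i)) = gg K n i * w' := by
    intro i; rw [hF0, FreeAlgebra.lift_ι_apply]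
  have hrel : ∀ ⦃x y⦄, RoseRel K n x y → F0 x = F0 y := by
    intro x y hxy
    induction hxy with
    | ghostEdgeSame i =>
      rw [map_mul, map_one, hF0g, hF0e, mul_assoc, ← mul_assoc w', hw'w, one_mul,
        gg_mul_ee, if_pos rfl]
    | ghostEdgeNe i j h =>
      rw [map_mul, map_zero, hF0g, hF0e, mul_assoc, ← mul_assoc w', hw'w, one_mul,
        gg_mul_ee, if_neg h]
    | ck2 =>
      rw [map_sum, map_one]
      have : ∀ i : Fin n, F0 (FreeAlgebra.ι K (RGen.e i) * FreeAlgebra.ι K (RGen.g i))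
          = w * (ee K n i * gg K n i) * w' := by
        intro i
        rw [map_mul, hF0e, hF0g]
        simp only [mul_assoc]
      rw [Finset.sum_congr rfl (fun i _ => this i), ← Finset.sum_mul, ← Finset.mul_sum,
        sum_ee_gg, mul_one, hww']
  refine ⟨RingQuot.liftAlgHom K ⟨F0, hrel⟩, fun i => ?_, fun i => ?_⟩
  · show (RingQuot.liftAlgHom K ⟨F0, hrel⟩)
      (RingQuot.mkAlgHom K (RoseRel K n) (FreeAlgebra.ι K (RGen.e i))) = _
    rw [RingQuot.liftAlgHom_mkAlgHom_apply, hF0e]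
  · show (RingQuot.liftAlgHom K ⟨F0, hrel⟩)
      (RingQuot.mkAlgHom K (RoseRel K n) (FreeAlgebra.ι K (RGen.g i))) = _
    rw [RingQuot.liftAlgHom_mkAlgHom_apply, hF0g]

lemma sigma_EE_mem (σ : LRose K n ≃ₐ[K] LRose K n) {a : LRose K n}
    (ha : a ∈ rComponent K n 0) (hae : ∀ i, σ (ee K n i) = a * ee K n i) :
    ∀ p : List (Fin n), σ (EE K n p) ∈ rComponent K n (p.length : ℤ) := by
  intro p
  induction p with
  | nil =>
    rw [EE_nil, map_one]
    simpa using (one_mem_comp (K := K) (n := n))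
  | cons i p' ih =>
    rw [EE_cons, map_mul, hae]
    have h1 := comp_mul (comp_mul ha (ee_mem_comp i)) ih
    have h2 : ((0:ℤ) + 1) + (p'.length : ℤ) = (((i :: p').length : ℕ) : ℤ) := by
      simp only [List.length_cons]
      push_cast
      ring
    exact h2 ▸ h1

lemma sigma_GG_mem (σ : LRose K n ≃ₐ[K] LRose K n) {a' : LRose K n}
    (ha' : a' ∈ rComponent K n 0) (hag : ∀ i, σ (gg K n i) = gg K n i * a') :
    ∀ q : List (Fin n), σ (GG K n q) ∈ rComponent K n (-(q.length : ℤ)) := by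
  intro q
  induction q with
  | nil =>
    rw [GG_nil, map_one]
    simpa using (one_mem_comp (K := K) (n := n))
  | cons i q' ih =>
    rw [GG_cons, map_mul, hag]
    have h1 := comp_mul ih (comp_mul (gg_mem_comp i) ha')
    have h2 : (-(q'.length : ℤ)) + ((-1) + 0) = -(((i :: q').length : ℕ) : ℤ) := by
      simp only [List.length_cons]
      push_cast
      ring
    exact h2 ▸ h1

end Dev5

/-- For a unit `u` of `L_K(R_n)`, `f_u` is an automorphism iff
`u^{-1} = f_u(w)` for some unit `w`; in this case `f_u^{-1} = f_w`.  Consequently the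
graded automorphisms of `L_K(R_n)` are exactly the automorphisms `f_a` for units `a` of
the degree-zero component `L_K(R_n)_0`. -/
theorem stmt10 (K : Type) [Field K] (n : ℕ) (hn : 2 ≤ n)
    (u u' : LRose K n) (huu' : u * u' = 1) (hu'u : u' * u = 1)
    (fu : LRose K n →ₐ[K] LRose K n)
    (hfue : ∀ i, fu (ee K n i) = u * ee K n i)
    (hfug : ∀ i, fu (gg K n i) = gg K n i * u') :
    (Function.Bijective ⇑fu ↔
      ∃ w w' : LRose K n, w * w' = 1 ∧ w' * w = 1 ∧ u' = fu w) ∧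
    (∀ w w' : LRose K n, w * w' = 1 → w' * w = 1 → u' = fu w →
      ∀ fw : LRose K n →ₐ[K] LRose K n,
        (∀ i, fw (ee K n i) = w * ee K n i) → (∀ i, fw (gg K n i) = gg K n i * w') →
        ∀ x, fu (fw x) = x ∧ fw (fu x) = x) ∧
    (∀ σ : LRose K n ≃ₐ[K] LRose K n,
      RGraded K n ⇑σ ↔
        ∃ a a' : LRose K n,
          a ∈ rComponent K n 0 ∧ a' ∈ rComponent K n 0 ∧
          a * a' = 1 ∧ a' * a = 1 ∧
          (∀ i, σ (ee K n i) = a * ee K n i) ∧ (∀ i, σ (gg K n i) = gg K n i * a')) := by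
  have hinj : Function.Injective ⇑fu := lrose_algHom_injective hn fu
  -- the key computation: any `fw` of the right shape is a right inverse of `fu`
  have key : ∀ (w w' : LRose K n), w * w' = 1 → w' * w = 1 → u' = fu w →
      ∀ fw : LRose K n →ₐ[K] LRose K n,
        (∀ i, fw (ee K n i) = w * ee K n i) → (∀ i, fw (gg K n i) = gg K n i * w') →
        ∀ x, fu (fw x) = x := by
    intro w w' hww' hw'w hw fw hfwe hfwg x
    have hfuw' : fu w' = u := by
      have h1 : u' * fu w' = 1 := by
        rw [hw, ← map_mul, hww', map_one]
      calc fu w' = (u * u') * fu w' := by rw [huu', one_mul]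
      _ = u * (u' * fu w') := by rw [mul_assoc]
      _ = u := by rw [h1, mul_one]
    have hcomp : fu.comp fw = AlgHom.id K (LRose K n) := by
      apply lrose_algHom_ext
      · intro i
        rw [AlgHom.comp_apply, AlgHom.id_apply, hfwe, map_mul, ← hw, hfue,
          ← mul_assoc, hu'u, one_mul]
      · intro i
        rw [AlgHom.comp_apply, AlgHom.id_apply, hfwg, map_mul, hfug, hfuw',
          mul_assoc, hu'u, mul_one]
    calc fu (fw x) = (fu.comp fw) x := rfl
    _ = x := by rw [hcomp, AlgHom.id_apply]
  refine ⟨⟨?_, ?_⟩, ?_, ?_⟩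
  · -- bijective → ∃ w w'
    intro hbij
    have hfg : ∀ z, fu (Function.surjInv hbij.2 z) = z :=
      fun z => Function.surjInv_eq hbij.2 z
    refine ⟨Function.surjInv hbij.2 u', Function.surjInv hbij.2 u, ?_, ?_, (hfg u').symm⟩
    · apply hbij.1
      rw [map_mul, hfg, hfg, map_one, hu'u]
    · apply hbij.1
      rw [map_mul, hfg, hfg, map_one, huu']
  · -- ∃ w w' → bijective
    rintro ⟨w, w', hww', hw'w, hw⟩
    obtain ⟨fw, hfwe, hfwg⟩ := exists_fw w w' hww' hw'w
    exact ⟨hinj, fun x => ⟨fw x, key w w' hww' hw'w hw fw hfwe hfwg x⟩⟩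
  · -- part 2
    intro w w' hww' hw'w hw fw hfwe hfwg x
    refine ⟨key w w' hww' hw'w hw fw hfwe hfwg x, ?_⟩
    exact hinj (key w w' hww' hw'w hw fw hfwe hfwg (fu x))
  · -- part 3
    intro σ
    constructor
    · intro hσ
      set a : LRose K n := ∑ k, σ (ee K n k) * gg K n k with ha_def
      set a' : LRose K n := ∑ k, ee K n k * σ (gg K n k) with ha'_def
      have ha_e : ∀ i, a * ee K n i = σ (ee K n i) := by
        intro i
        rw [ha_def, Finset.sum_mul]
        have hterm : ∀ k, σ (ee K n k) * gg K n k * ee K n i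
            = if k = i then σ (ee K n i) else 0 := by
          intro k
          rw [mul_assoc, gg_mul_ee]
          by_cases h : k = i
          · rw [if_pos h, if_pos h, mul_one, h]
          · rw [if_neg h, if_neg h, mul_zero]
        rw [Finset.sum_congr rfl (fun k _ => hterm k),
          Finset.sum_ite_eq' Finset.univ i (fun _ => σ (ee K n i)),
          if_pos (Finset.mem_univ i)]
      have hg_a' : ∀ i, gg K n i * a' = σ (gg K n i) := by
        intro i
        rw [ha'_def, Finset.mul_sum]
        have hterm : ∀ k, gg K n i * (ee K n k * σ (gg K n k))
            = if i = k then σ (gg K n k) else 0 := by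
          intro k
          rw [← mul_assoc, gg_mul_ee]
          by_cases h : i = k
          · rw [if_pos h, if_pos h, one_mul]
          · rw [if_neg h, if_neg h, zero_mul]
        rw [Finset.sum_congr rfl (fun k _ => hterm k),
          Finset.sum_ite_eq Finset.univ i (fun k => σ (gg K n k)),
          if_pos (Finset.mem_univ i)]
      have haa' : a * a' = 1 := by
        rw [ha_def, Finset.sum_mul]
        have hterm : ∀ k, σ (ee K n k) * gg K n k * a' = σ (ee K n k * gg K n k) := by
          intro k
          rw [mul_assoc, hg_a' k, ← map_mul]
        rw [Finset.sum_congr rfl (fun k _ => hterm k), ← map_sum, sum_ee_gg, map_one]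
      have ha'a : a' * a = 1 := by
        rw [ha'_def, ha_def, Finset.sum_mul_sum]
        have hterm : ∀ j k, (ee K n j * σ (gg K n j)) * (σ (ee K n k) * gg K n k)
            = if j = k then ee K n j * gg K n k else 0 := by
          intro j k
          have hgσ : σ (gg K n j) * σ (ee K n k) = if j = k then 1 else 0 := by
            rw [← map_mul, gg_mul_ee]
            by_cases h : j = k
            · rw [if_pos h, map_one]
            · rw [if_neg h, map_zero]
          rw [mul_assoc, ← mul_assoc (σ (gg K n j)), hgσ]
          by_cases h : j = k
          · rw [if_pos h, if_pos h, one_mul]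
          · rw [if_neg h, if_neg h, zero_mul, mul_zero]
        rw [Finset.sum_congr rfl (fun j _ => Finset.sum_congr rfl (fun k _ => hterm j k))]
        rw [Finset.sum_congr rfl (fun j _ =>
          (Finset.sum_ite_eq Finset.univ j (fun k => ee K n j * gg K n k)).trans
            (if_pos (Finset.mem_univ j)))]
        exact sum_ee_gg
      have h10 : (1 : ℤ) + (-1) = 0 := by norm_num
      refine ⟨a, a', ?_, ?_, haa', ha'a, fun i => (ha_e i).symm, fun i => (hg_a' i).symm⟩
      · rw [ha_def]
        exact Submodule.sum_mem _ (fun k _ =>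
          h10 ▸ comp_mul (hσ 1 _ (ee_mem_comp k)) (gg_mem_comp k))
      · rw [ha'_def]
        exact Submodule.sum_mem _ (fun k _ =>
          h10 ▸ comp_mul (ee_mem_comp k) (hσ (-1) _ (gg_mem_comp k)))
    · rintro ⟨a, a', ha0, ha'0, -, -, hae, hag⟩
      intro d x hx
      induction hx using Submodule.span_induction with
      | mem x hxm =>
        obtain ⟨p, q, hdeg, rfl⟩ := hxm
        rw [map_mul]
        have h1 := sigma_EE_mem σ ha0 hae p
        have h2 := sigma_GG_mem σ ha'0 hag q
        have h3 := comp_mul h1 h2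
        have heq : (p.length : ℤ) + -(q.length : ℤ) = d := by omega
        exact heq ▸ h3
      | zero => rw [map_zero]; exact zero_mem _
      | add y z hy hz hy' hz' => rw [map_add]; exact add_mem hy' hz'
      | smul c y hy hy' => rw [map_smul]; exact Submodule.smul_mem _ _ hy'
end
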